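/- There exists a constant N such that for every prime p > N and all a, b ∈ ℤ/pℤ with a ≠ b, the graph on ℤ/pℤ in which distinct elements x and y are adjacent if and only if y = x² + a, x = y² + a, y = x² + b, or x = y² + b has negative Euler characteristic: χ(G) < 0. -/
import Mathlib


/-!
For all sufficiently large primes `p` and all `a ≠ b` in `ℤ/pℤ`, the two-generator quadratic
orbital graph (distinct `x, y` adjacent iff `y = x² + a`, `x = y² + a`, `y = x² + b` or
`x = y² + b`) has negative Euler characteristic.
-/

/-- The two-generator quadratic orbital graph on `ℤ/pℤ`: two distinct vertices `x, y` are
adjacent if and only if `y = x² + a`, `x = y² + a`, `y = x² + b` or `x = y² + b`. -/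
def quadGraph2 (p : ℕ) (a b : ZMod p) : SimpleGraph (ZMod p) :=
  SimpleGraph.fromRel (fun x y => y = x ^ 2 + a ∨ y = x ^ 2 + b)

/-- `v_k`: the number of `(k+1)`-element cliques of `quadGraph2 p a b`. -/
noncomputable def v (p : ℕ) (a b : ZMod p) (k : ℕ) : ℕ :=
  Nat.card {s : Finset (ZMod p) // (quadGraph2 p a b).IsNClique (k + 1) s}

/-- The Euler characteristic `χ(G) = Σ_{k ≥ 0} (-1)^k v_k` of `quadGraph2 p a b`
(the sum is finite: cliques have at most `p` vertices). -/
noncomputable def eulerChar (p : ℕ) (a b : ZMod p) : ℤ :=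
  ∑ k ∈ Finset.range p, (-1 : ℤ) ^ k * v p a b k

open Polynomial Finset SimpleGraph

open scoped Classical in
lemma card_filter_le_natDegree {K : Type*} [Field K] [Fintype K]
    (q : K[X]) (hq : q ≠ 0) :
    (Finset.univ.filter fun x => q.eval x = 0).card ≤ q.natDegree := by
  classical
  calc (Finset.univ.filter fun x => q.eval x = 0).card
      ≤ q.roots.toFinset.card := Finset.card_le_card (by
        intro x hx
        simp only [Finset.mem_filter] at hx
        simp [Multiset.mem_toFinset, mem_roots hq, IsRoot, hx.2])
    _ ≤ Multiset.card q.roots := q.roots.toFinset_card_le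
    _ ≤ q.natDegree := q.card_roots'

lemma card_filter_le_of_poly {K : Type*} [Field K] [Fintype K] {d : ℕ}
    (P : K → Prop) [DecidablePred P] (q : K[X]) (hdeg : q.natDegree = d) (hd : d ≠ 0)
    (himp : ∀ x, P x → q.eval x = 0) :
    (Finset.univ.filter P).card ≤ d := by
  classical
  have hq : q ≠ 0 := by rintro rfl; simp at hdeg; omega
  refine le_trans (Finset.card_le_card ?_)
    (le_trans (card_filter_le_natDegree q hq) hdeg.le)
  intro x hx
  rw [Finset.mem_filter] at hx ⊢
  exact ⟨hx.1, himp x hx.2⟩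

/-- The "bad" predicate satisfied by every vertex of a triangle. -/
def Bad {p : ℕ} (a b : ZMod p) (x : ZMod p) : Prop :=
  ∃ u v w : ZMod p, (u = a ∨ u = b) ∧ (v = a ∨ v = b) ∧ (w = a ∨ w = b) ∧
    ((x^2+u)^2 + w = x^2 + v ∨
     ((x^2+u)^2 + w)^2 + v = x ∨
     x^2 + u = x - v + w ∨
     (x - u + w)^2 = x - v)

lemma adj_cases {p : ℕ} {a b x y : ZMod p} (h : (quadGraph2 p a b).Adj x y) :
    ∃ c, (c = a ∨ c = b) ∧ (y = x ^ 2 + c ∨ x = y ^ 2 + c) := by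
  rw [quadGraph2, SimpleGraph.fromRel_adj] at h
  rcases h.2 with (h | h) | (h | h)
  · exact ⟨a, Or.inl rfl, Or.inl h⟩
  · exact ⟨b, Or.inr rfl, Or.inl h⟩
  · exact ⟨a, Or.inl rfl, Or.inr h⟩
  · exact ⟨b, Or.inr rfl, Or.inr h⟩

lemma bad_of_triangle {p : ℕ} {a b x y z : ZMod p}
    (hxy : (quadGraph2 p a b).Adj x y) (hxz : (quadGraph2 p a b).Adj x z)
    (hyz : (quadGraph2 p a b).Adj y z) : Bad a b x := by
  obtain ⟨c1, hc1, h1⟩ := adj_cases hxy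
  obtain ⟨c2, hc2, h2⟩ := adj_cases hxz
  obtain ⟨c3, hc3, h3⟩ := adj_cases hyz
  rcases h1 with h1 | h1 <;> rcases h2 with h2 | h2 <;> rcases h3 with h3 | h3
  · exact ⟨c1, c2, c3, hc1, hc2, hc3, Or.inl (by linear_combination h2 - h3 - (x^2+c1+y)*h1)⟩
  · exact ⟨c2, c1, c3, hc2, hc1, hc3, Or.inl (by linear_combination h1 - h3 - (x^2+c2+z)*h2)⟩
  · exact ⟨c1, c2, c3, hc1, hc2, hc3, Or.inr (Or.inl (by
      linear_combination (-((((x^2+c1)^2+c3)+z)*((x^2+c1)+y)))*h1 - (((x^2+c1)^2+c3)+z)*h3 - h2))⟩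
  · exact ⟨c1, c2, c3, hc1, hc2, hc3, Or.inr (Or.inr (Or.inl (by
      linear_combination h3 - h1 - h2)))⟩
  · exact ⟨c2, c1, c3, hc2, hc1, hc3, Or.inr (Or.inr (Or.inl (by
      linear_combination h3 - h2 - h1)))⟩
  · exact ⟨c2, c1, c3, hc2, hc1, hc3, Or.inr (Or.inl (by
      linear_combination (-((((x^2+c2)^2+c3)+y)*((x^2+c2)+z)))*h2 - (((x^2+c2)^2+c3)+y)*h3 - h1))⟩
  · exact ⟨c1, c2, c3, hc1, hc2, hc3, Or.inr (Or.inr (Or.inr (by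
      linear_combination (x-c1+y^2+2*c3)*h1 - (y^2+c3+z)*h3 - h2)))⟩
  · exact ⟨c2, c1, c3, hc2, hc1, hc3, Or.inr (Or.inr (Or.inr (by
      linear_combination (x-c2+z^2+2*c3)*h2 - (z^2+c3+y)*h3 - h1)))⟩

lemma finset_pair_eq {α : Type*} [DecidableEq α] {x y x' y' : α}
    (h : ({x, y} : Finset α) = {x', y'}) : (x = x' ∧ y = y') ∨ (x = y' ∧ y = x') := by
  have h2 := congrArg (fun s : Finset α => (s : Set α)) h
  simp only [Finset.coe_insert, Finset.coe_singleton] at h2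
  exact Set.pair_eq_pair_iff.1 h2

section Counting

variable {p : ℕ} [Fact p.Prime] (a b : ZMod p)

open scoped Classical in
/-- The set of all "bad" vertices. -/
noncomputable def badSet (p : ℕ) [Fact p.Prime] (a b : ZMod p) : Finset (ZMod p) :=
  Finset.univ.filter (Bad a b)

lemma mem_badSet {p : ℕ} [Fact p.Prime] {a b x : ZMod p} :
    x ∈ badSet p a b ↔ Bad a b x := by
  classical
  simp [badSet]

/-- The set of "bad" vertices is small. -/
lemma card_bad_le : (badSet p a b).card ≤ 128 := by
  classical
  set S : Finset (ZMod p) := {a, b} with hS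
  have hF : ∀ u v w : ZMod p,
      (Finset.univ.filter fun x : ZMod p =>
        ((x^2+u)^2 + w = x^2 + v ∨
         ((x^2+u)^2 + w)^2 + v = x ∨
         x^2 + u = x - v + w ∨
         (x - u + w)^2 = x - v)).card ≤ 16 := by
    intro u v w
    have b1 : (Finset.univ.filter fun x : ZMod p => (x^2+u)^2 + w = x^2 + v).card ≤ 4 :=
      card_filter_le_of_poly (d := 4) (fun x : ZMod p => (x^2+u)^2 + w = x^2 + v) ((X^2 + C u)^2 + C w - (X^2 + C v))
        (by compute_degree!) (by norm_num) (fun x hx => by simp [hx])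
    have b2 : (Finset.univ.filter fun x : ZMod p => ((x^2+u)^2 + w)^2 + v = x).card ≤ 8 :=
      card_filter_le_of_poly (d := 8) (fun x : ZMod p => ((x^2+u)^2 + w)^2 + v = x) (((X^2 + C u)^2 + C w)^2 + C v - X)
        (by compute_degree!) (by norm_num) (fun x hx => by simp [hx])
    have b3 : (Finset.univ.filter fun x : ZMod p => x^2 + u = x - v + w).card ≤ 2 :=
      card_filter_le_of_poly (d := 2) (fun x : ZMod p => x^2 + u = x - v + w) (X^2 + C u - (X - C v + C w))
        (by compute_degree!) (by norm_num) (fun x hx => by simp [hx])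
    have b4 : (Finset.univ.filter fun x : ZMod p => (x - u + w)^2 = x - v).card ≤ 2 :=
      card_filter_le_of_poly (d := 2) (fun x : ZMod p => (x - u + w)^2 = x - v) ((X - C u + C w)^2 - (X - C v))
        (by compute_degree!) (by norm_num) (fun x hx => by simp [hx])
    rw [Finset.filter_or, Finset.filter_or, Finset.filter_or]
    refine le_trans (Finset.card_union_le _ _) (le_trans (add_le_add b1 (le_trans
      (Finset.card_union_le _ _) (add_le_add b2 (le_trans (Finset.card_union_le _ _)
      (add_le_add b3 b4))))) (by norm_num))
  have hsub : badSet p a b ⊆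
      S.biUnion (fun u => S.biUnion (fun v => S.biUnion (fun w =>
        Finset.univ.filter fun x : ZMod p =>
          ((x^2+u)^2 + w = x^2 + v ∨
           ((x^2+u)^2 + w)^2 + v = x ∨
           x^2 + u = x - v + w ∨
           (x - u + w)^2 = x - v)))) := by
    intro x hx
    rw [mem_badSet] at hx
    obtain ⟨u, v, w, hu, hv, hw, hcond⟩ := hx
    have hmem : ∀ c : ZMod p, (c = a ∨ c = b) → c ∈ S := by
      rintro c (rfl | rfl) <;> simp [hS]
    refine Finset.mem_biUnion.2 ⟨u, hmem u hu, Finset.mem_biUnion.2 ⟨v, hmem v hv,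
      Finset.mem_biUnion.2 ⟨w, hmem w hw, Finset.mem_filter.2 ⟨Finset.mem_univ x, hcond⟩⟩⟩⟩
  have hScard : S.card ≤ 2 := le_trans (Finset.card_insert_le _ _) (by simp)
  refine le_trans (Finset.card_le_card hsub) ?_
  refine le_trans (Finset.card_biUnion_le) ?_
  refine le_trans (Finset.sum_le_card_nsmul _ _ 64 ?_) (by
    rw [smul_eq_mul]; omega)
  intro u _
  refine le_trans (Finset.card_biUnion_le) ?_
  refine le_trans (Finset.sum_le_card_nsmul _ _ 32 ?_) (by
    rw [smul_eq_mul]; omega)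
  intro v _
  refine le_trans (Finset.card_biUnion_le) ?_
  refine le_trans (Finset.sum_le_card_nsmul _ _ 16 ?_) (by
    rw [smul_eq_mul]; omega)
  intro w _
  exact hF u v w

lemma isNClique_pair {x c : ZMod p} (hc : c = a ∨ c = b) (hne : x ≠ x^2 + c) :
    (quadGraph2 p a b).IsNClique 2 {x, x^2 + c} := by
  classical
  have hadj : (quadGraph2 p a b).Adj x (x^2+c) := by
    rw [quadGraph2, SimpleGraph.fromRel_adj]
    exact ⟨hne, Or.inl (by rcases hc with rfl | rfl; exacts [Or.inl rfl, Or.inr rfl])⟩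
  constructor
  · intro u hu v hv huv
    simp only [Finset.coe_insert, Set.mem_insert_iff, Finset.coe_singleton,
      Set.mem_singleton_iff] at hu hv
    rcases hu with rfl | rfl <;> rcases hv with rfl | rfl
    · exact absurd rfl huv
    · exact hadj
    · exact hadj.symm
    · exact absurd rfl huv
  · rw [Finset.card_insert_of_notMem (by simp [hne]), Finset.card_singleton]

lemma v_zero : v p a b 0 = p := by
  have e : ZMod p ≃ {s : Finset (ZMod p) // (quadGraph2 p a b).IsNClique 1 s} := by
    refine Equiv.ofBijective
      (fun x => ⟨{x}, SimpleGraph.isNClique_one.2 ⟨x, rfl⟩⟩) ⟨?_, ?_⟩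
    · intro x y h
      have : ({x} : Finset (ZMod p)) = {y} := congrArg Subtype.val h
      exact Finset.singleton_injective this
    · rintro ⟨s, hs⟩
      obtain ⟨x, rfl⟩ := SimpleGraph.isNClique_one.1 hs
      exact ⟨x, rfl⟩
  rw [v, ← Nat.card_congr e, Nat.card_zmod]

open scoped Classical in
lemma v_one (hab : a ≠ b) : 2 * p ≤ v p a b 1 + 20 := by
  classical
  set Da := Finset.univ.filter
    (fun x : ZMod p => x ≠ x^2+a ∧ x ≠ (x^2+a)^2+a ∧ x ≠ (x^2+a)^2+b) with hDa
  set Db := Finset.univ.filter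
    (fun x : ZMod p => x ≠ x^2+b ∧ x ≠ (x^2+b)^2+b ∧ x ≠ (x^2+b)^2+a) with hDb
  have huniv : (Finset.univ : Finset (ZMod p)).card = p := by
    rw [Finset.card_univ, ZMod.card]
  have hbound : ∀ u w : ZMod p,
      (Finset.univ.filter (fun x : ZMod p =>
        x = x^2+u ∨ x = (x^2+u)^2+u ∨ x = (x^2+u)^2+w)).card ≤ 10 := by
    intro u w
    have b1 : (Finset.univ.filter fun x : ZMod p => x = x^2+u).card ≤ 2 :=
      card_filter_le_of_poly (d := 2) (fun x : ZMod p => x = x^2+u)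
        (X^2 + C u - X) (by compute_degree!) (by norm_num)
        (fun x hx => by simp [← hx])
    have b2 : (Finset.univ.filter fun x : ZMod p => x = (x^2+u)^2+u).card ≤ 4 :=
      card_filter_le_of_poly (d := 4) (fun x : ZMod p => x = (x^2+u)^2+u)
        ((X^2 + C u)^2 + C u - X) (by compute_degree!) (by norm_num)
        (fun x hx => by simp [← hx])
    have b3 : (Finset.univ.filter fun x : ZMod p => x = (x^2+u)^2+w).card ≤ 4 :=
      card_filter_le_of_poly (d := 4) (fun x : ZMod p => x = (x^2+u)^2+w)
        ((X^2 + C u)^2 + C w - X) (by compute_degree!) (by norm_num)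
        (fun x hx => by simp [← hx])
    rw [Finset.filter_or, Finset.filter_or]
    refine le_trans (Finset.card_union_le _ _) (le_trans (add_le_add b1
      (le_trans (Finset.card_union_le _ _) (add_le_add b2 b3))) (by norm_num))
  have hpa : p ≤ Da.card + 10 := by
    have hsplit := Finset.card_filter_add_card_filter_not
      (s := (Finset.univ : Finset (ZMod p)))
      (p := fun x : ZMod p => x ≠ x^2+a ∧ x ≠ (x^2+a)^2+a ∧ x ≠ (x^2+a)^2+b)
    have hneg : (Finset.univ.filter (fun x : ZMod p =>
        ¬(x ≠ x^2+a ∧ x ≠ (x^2+a)^2+a ∧ x ≠ (x^2+a)^2+b))).card ≤ 10 := by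
      refine le_trans (Finset.card_le_card ?_) (hbound a b)
      intro x hx
      rw [Finset.mem_filter] at hx ⊢
      refine ⟨hx.1, ?_⟩
      by_contra hcon
      push_neg at hcon
      exact hx.2 ⟨hcon.1, hcon.2.1, hcon.2.2⟩
    rw [huniv, ← hDa] at hsplit
    omega
  have hpb : p ≤ Db.card + 10 := by
    have hsplit := Finset.card_filter_add_card_filter_not
      (s := (Finset.univ : Finset (ZMod p)))
      (p := fun x : ZMod p => x ≠ x^2+b ∧ x ≠ (x^2+b)^2+b ∧ x ≠ (x^2+b)^2+a)
    have hneg : (Finset.univ.filter (fun x : ZMod p =>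
        ¬(x ≠ x^2+b ∧ x ≠ (x^2+b)^2+b ∧ x ≠ (x^2+b)^2+a))).card ≤ 10 := by
      refine le_trans (Finset.card_le_card ?_) (hbound b a)
      intro x hx
      rw [Finset.mem_filter] at hx ⊢
      refine ⟨hx.1, ?_⟩
      by_contra hcon
      push_neg at hcon
      exact hx.2 ⟨hcon.1, hcon.2.1, hcon.2.2⟩
    rw [huniv, ← hDb] at hsplit
    omega
  -- the injection into 2-cliques
  have memDa : ∀ {x : ZMod p}, x ∈ Da →
      x ≠ x^2+a ∧ x ≠ (x^2+a)^2+a ∧ x ≠ (x^2+a)^2+b :=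
    fun hx => (Finset.mem_filter.1 hx).2
  have memDb : ∀ {x : ZMod p}, x ∈ Db →
      x ≠ x^2+b ∧ x ≠ (x^2+b)^2+b ∧ x ≠ (x^2+b)^2+a :=
    fun hx => (Finset.mem_filter.1 hx).2
  let f : ({x // x ∈ Da} ⊕ {x // x ∈ Db}) →
      {s : Finset (ZMod p) // (quadGraph2 p a b).IsNClique 2 s} := fun t =>
    match t with
    | Sum.inl ⟨x, hx⟩ => ⟨{x, x^2+a}, isNClique_pair a b (Or.inl rfl) (memDa hx).1⟩
    | Sum.inr ⟨x, hx⟩ => ⟨{x, x^2+b}, isNClique_pair a b (Or.inr rfl) (memDb hx).1⟩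
  have hfinj : Function.Injective f := by
    rintro (⟨x, hx⟩ | ⟨x, hx⟩) (⟨x', hx'⟩ | ⟨x', hx'⟩) heq
    · obtain ⟨hx1, hx2, hx3⟩ := memDa hx
      have hset : ({x, x^2+a} : Finset (ZMod p)) = {x', x'^2+a} :=
        congrArg Subtype.val heq
      rcases finset_pair_eq hset with ⟨h1, _⟩ | ⟨h1, h2⟩
      · exact congrArg Sum.inl (Subtype.ext h1)
      · rw [← h2] at h1
        exact absurd h1 hx2
    · obtain ⟨hx1, hx2, hx3⟩ := memDa hx
      exfalso
      have hset : ({x, x^2+a} : Finset (ZMod p)) = {x', x'^2+b} :=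
        congrArg Subtype.val heq
      rcases finset_pair_eq hset with ⟨h1, h2⟩ | ⟨h1, h2⟩
      · rw [← h1] at h2
        exact hab (add_left_cancel h2)
      · rw [← h2] at h1
        exact absurd h1 hx3
    · obtain ⟨hx1, hx2, hx3⟩ := memDb hx
      exfalso
      have hset : ({x, x^2+b} : Finset (ZMod p)) = {x', x'^2+a} :=
        congrArg Subtype.val heq
      rcases finset_pair_eq hset with ⟨h1, h2⟩ | ⟨h1, h2⟩
      · rw [← h1] at h2
        exact hab (add_left_cancel h2).symm
      · rw [← h2] at h1
        exact absurd h1 hx3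
    · obtain ⟨hx1, hx2, hx3⟩ := memDb hx
      have hset : ({x, x^2+b} : Finset (ZMod p)) = {x', x'^2+b} :=
        congrArg Subtype.val heq
      rcases finset_pair_eq hset with ⟨h1, _⟩ | ⟨h1, h2⟩
      · exact congrArg Sum.inr (Subtype.ext h1)
      · rw [← h2] at h1
        exact absurd h1 hx2
  have hcard : Nat.card ({x // x ∈ Da} ⊕ {x // x ∈ Db}) = Da.card + Db.card := by
    simp [Nat.card_sum, Nat.card_eq_fintype_card]
  have hle := Nat.card_le_card_of_injective f hfinj
  rw [hcard] at hle
  have hv1 : v p a b 1 =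
      Nat.card {s : Finset (ZMod p) // (quadGraph2 p a b).IsNClique 2 s} := by
    rw [v]
  omega

lemma clique_subset_bad {k : ℕ} {s : Finset (ZMod p)} (hk : 2 ≤ k)
    (hs : (quadGraph2 p a b).IsNClique (k + 1) s) : s ⊆ badSet p a b := by
  classical
  intro x hxs
  have hcard : 1 < (s.erase x).card := by
    rw [Finset.card_erase_of_mem hxs, hs.2]; omega
  obtain ⟨y, hy, z, hz, hyz⟩ := Finset.one_lt_card.1 hcard
  have hadjxy : (quadGraph2 p a b).Adj x y :=
    (hs.1 (Finset.mem_coe.2 hxs) (Finset.mem_coe.2 (Finset.mem_of_mem_erase hy))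
      (Ne.symm (Finset.ne_of_mem_erase hy)))
  have hadjxz : (quadGraph2 p a b).Adj x z :=
    (hs.1 (Finset.mem_coe.2 hxs) (Finset.mem_coe.2 (Finset.mem_of_mem_erase hz))
      (Ne.symm (Finset.ne_of_mem_erase hz)))
  have hadjyz : (quadGraph2 p a b).Adj y z :=
    hs.1 (Finset.mem_coe.2 (Finset.mem_of_mem_erase hy))
      (Finset.mem_coe.2 (Finset.mem_of_mem_erase hz)) hyz
  exact mem_badSet.2 (bad_of_triangle hadjxy hadjxz hadjyz)

lemma v_le_of_two_le {k : ℕ} (hk : 2 ≤ k) : v p a b k ≤ 2 ^ 128 := by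
  classical
  have hinj : Function.Injective
      (fun s : {s : Finset (ZMod p) // (quadGraph2 p a b).IsNClique (k+1) s} =>
        (⟨s.1, Finset.mem_powerset.2 (clique_subset_bad a b hk s.2)⟩ :
          {t // t ∈ (badSet p a b).powerset})) := by
    intro s t h
    apply Subtype.ext
    simpa using congrArg Subtype.val h
  have hle := Nat.card_le_card_of_injective _ hinj
  calc v p a b k ≤ Nat.card {t // t ∈ (badSet p a b).powerset} := hle
    _ = (badSet p a b).powerset.card := by
        rw [Nat.card_eq_fintype_card, Fintype.card_coe]
    _ = 2 ^ (badSet p a b).card := Finset.card_powerset _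
    _ ≤ 2 ^ 128 := Nat.pow_le_pow_right (by norm_num) (card_bad_le a b)

lemma v_eq_zero_of_ge {k : ℕ} (hk : 128 ≤ k) : v p a b k = 0 := by
  have hempty : IsEmpty {s : Finset (ZMod p) // (quadGraph2 p a b).IsNClique (k+1) s} := by
    constructor
    rintro ⟨s, hs⟩
    have h1 : s ⊆ badSet p a b := clique_subset_bad a b (by omega) hs
    have h2 := Finset.card_le_card h1
    rw [hs.2] at h2
    have h3 := card_bad_le a b
    omega
  rw [v]
  exact Nat.card_of_isEmpty

end Counting


/-- There is a constant `N` such that for every prime `p > N` and all `a ≠ b` in `ℤ/pℤ`,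
the two-generator quadratic orbital graph has negative Euler characteristic. -/
theorem quadGraph2_euler_neg :
    ∃ N : ℕ, ∀ p : ℕ, p.Prime → N < p → ∀ a b : ZMod p, a ≠ b →
      eulerChar p a b < 0 := by
  refine ⟨2 ^ 140, ?_⟩
  intro p hp hpN a b hab
  haveI := Fact.mk hp
  have hp2 : 130 ≤ p := by
    have h140 : (130 : ℕ) ≤ 2 ^ 140 := by norm_num
    omega
  rw [eulerChar, Finset.range_eq_Ico,
    Finset.sum_eq_sum_Ico_succ_bot (by omega : 0 < p),
    Finset.sum_eq_sum_Ico_succ_bot (by omega : 1 < p)]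
  have h0 : v p a b 0 = p := v_zero a b
  have h1 : 2 * p ≤ v p a b 1 + 20 := v_one a b hab
  have htail : (∑ k ∈ Finset.Ico 2 p, (-1 : ℤ) ^ k * v p a b k) ≤ 127 * 2 ^ 128 := by
    have step1 : (∑ k ∈ Finset.Ico 2 p, (-1 : ℤ) ^ k * v p a b k)
        ≤ ∑ k ∈ Finset.Ico 2 p, (v p a b k : ℤ) := by
      refine Finset.sum_le_sum (fun k _ => ?_)
      calc (-1 : ℤ) ^ k * v p a b k ≤ |(-1 : ℤ) ^ k * v p a b k| := le_abs_self _
        _ = v p a b k := by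
            rw [abs_mul, abs_pow, abs_neg, abs_one, one_pow, one_mul,
              abs_of_nonneg (by positivity)]
    have step2 : (∑ k ∈ Finset.Ico 2 p, (v p a b k : ℤ))
        = ∑ k ∈ Finset.Ico 2 129, (v p a b k : ℤ) := by
      rw [← Finset.sum_Ico_consecutive (fun k => (v p a b k : ℤ))
        (by omega : 2 ≤ 129) (by omega : 129 ≤ p)]
      have hzero : (∑ k ∈ Finset.Ico 129 p, (v p a b k : ℤ)) = 0 :=
        Finset.sum_eq_zero (fun k hk => by
          have hk129 := (Finset.mem_Ico.1 hk).1
          rw [v_eq_zero_of_ge a b (by omega)]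
          simp)
      rw [hzero, add_zero]
    have step3 : (∑ k ∈ Finset.Ico 2 129, (v p a b k : ℤ)) ≤ 127 * 2 ^ 128 := by
      refine le_trans (Finset.sum_le_card_nsmul _ _ ((2:ℤ) ^ 128) ?_) ?_
      · intro k hk
        have hk2 := (Finset.mem_Ico.1 hk).1
        exact_mod_cast v_le_of_two_le a b hk2
      · rw [Nat.card_Ico, nsmul_eq_mul]
        norm_num
    calc (∑ k ∈ Finset.Ico 2 p, (-1 : ℤ) ^ k * v p a b k)
        ≤ ∑ k ∈ Finset.Ico 2 p, (v p a b k : ℤ) := step1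
      _ = ∑ k ∈ Finset.Ico 2 129, (v p a b k : ℤ) := step2
      _ ≤ 127 * 2 ^ 128 := step3
  rw [h0]
  have hcast1 : (2 : ℤ) * p ≤ (v p a b 1 : ℤ) + 20 := by exact_mod_cast h1
  have hcastp : (2 : ℤ) ^ 140 < (p : ℤ) := by exact_mod_cast hpN
  have hnum : (127 * 2 ^ 128 + 20 : ℤ) < 2 ^ 140 := by norm_num
  simp only [pow_zero, one_mul, pow_one, neg_one_mul]
  linarith [htail, hcast1, hcastp, hnum]
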